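/- Define B: ℤ^(a+b+c) → ℤ² by B(x₁,...,x_a, y₁,...,y_b, z₁,...,z_c) = (Σxᵢ − Σz_k, Σy_j − Σz_k). Then B is surjective, and the number of lattice points in its image of the cube {−1,1}^(a+b+c), i.e. |B({±1}^(a+b+c))|, equals ab + ac + bc + a + b + c + 1, for all positive integers a, b, c. -/

import Mathlib

lemma sum_pm_range (n : ℕ) (f : Fin n → ℤ) (hf : ∀ i, f i = 1 ∨ f i = -1) :
    ∃ x : ℤ, 0 ≤ x ∧ x ≤ n ∧ ∑ i, f i = 2 * x - n := by
  classical
  set s := Finset.univ.filter (fun i => f i = 1) with hs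
  refine ⟨s.card, by positivity, ?_, ?_⟩
  · exact_mod_cast (Finset.card_filter_le _ _).trans_eq (Finset.card_fin n)
  · have h1 : ∑ i ∈ s, f i = s.card := by
      rw [Finset.sum_congr rfl (fun i hi => (Finset.mem_filter.1 hi).2),
        Finset.sum_const, nsmul_eq_mul, mul_one]
    have h2 : ∑ i ∈ sᶜ, f i = -(sᶜ.card : ℤ) := by
      have hneg : ∀ i ∈ sᶜ, f i = -1 := by
        intro i hi
        rcases hf i with h | h
        · exact absurd (Finset.mem_filter.2 ⟨Finset.mem_univ i, h⟩) (Finset.mem_compl.1 hi)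
        · exact h
      rw [Finset.sum_congr rfl hneg, Finset.sum_const, nsmul_eq_mul, mul_neg_one]
    have h3 : s.card + sᶜ.card = n := by
      rw [Finset.card_add_card_compl, Fintype.card_fin]
    have h4 := Finset.sum_add_sum_compl s f
    rw [h1, h2] at h4
    omega

lemma exists_pm_sum (n : ℕ) (x : ℤ) (h0 : 0 ≤ x) (hn : x ≤ n) :
    ∃ f : Fin n → ℤ, (∀ i, f i = 1 ∨ f i = -1) ∧ ∑ i, f i = 2 * x - n := by
  classical
  set k := x.toNat with hk
  have hkn : k ≤ n := by omega
  refine ⟨fun i => if (i : ℕ) < k then 1 else -1,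
    fun i => by by_cases h : (i : ℕ) < k <;> simp [h], ?_⟩
  rw [Fin.sum_univ_eq_sum_range (fun i => if i < k then (1:ℤ) else -1)]
  rw [Finset.range_eq_Ico, ← Finset.sum_Ico_consecutive _ (Nat.zero_le k) hkn]
  have e1 : ∑ i ∈ Finset.Ico 0 k, (if i < k then (1:ℤ) else -1) = k := by
    rw [Finset.sum_congr rfl (fun i hi => if_pos (Finset.mem_Ico.1 hi).2),
      Finset.sum_const, Nat.card_Ico, nsmul_eq_mul, mul_one, Nat.sub_zero]
  have e2 : ∑ i ∈ Finset.Ico k n, (if i < k then (1:ℤ) else -1) = -((n:ℤ) - k) := by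
    rw [Finset.sum_congr rfl (fun i hi => if_neg (by
      have := (Finset.mem_Ico.1 hi).1; omega)),
      Finset.sum_const, Nat.card_Ico, nsmul_eq_mul, mul_neg_one]
    push_cast [Nat.sub_eq, Nat.cast_sub hkn]
    ring
  rw [e1, e2]
  omega

open Finset

lemma shift_inj (z : ℤ) : Function.Injective (fun p : ℤ × ℤ => (p.1 - z, p.2 - z)) := by
  rintro ⟨x, y⟩ ⟨x', y'⟩ h
  simp only [Prod.mk.injEq] at h
  simp only [Prod.mk.injEq]
  omega

lemma mem_image_shift (l1 u1 l2 u2 z : ℤ) (p : ℤ × ℤ) :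
    p ∈ ((Icc l1 u1) ×ˢ (Icc l2 u2)).image (fun q => (q.1 - z, q.2 - z)) ↔
      l1 ≤ p.1 + z ∧ p.1 + z ≤ u1 ∧ l2 ≤ p.2 + z ∧ p.2 + z ≤ u2 := by
  simp only [Finset.mem_image, Finset.mem_product, Finset.mem_Icc, Prod.exists]
  constructor
  · rintro ⟨x, y, ⟨⟨h1, h2⟩, h3, h4⟩, heq⟩
    rw [← heq]
    simp only
    omega
  · rintro ⟨h1, h2, h3, h4⟩
    exact ⟨p.1 + z, p.2 + z, ⟨⟨by omega, by omega⟩, by omega, by omega⟩, by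
      simp only [add_sub_cancel_right]⟩

lemma card_image_shift (l1 u1 l2 u2 z : ℤ) :
    (((Icc l1 u1) ×ˢ (Icc l2 u2)).image (fun q => (q.1 - z, q.2 - z))).card
      = (u1 + 1 - l1).toNat * (u2 + 1 - l2).toNat := by
  rw [Finset.card_image_of_injective _ (shift_inj z), Finset.card_product,
    Int.card_Icc, Int.card_Icc]

noncomputable def Dset (a b : ℕ) (z : ℤ) : Finset (ℤ × ℤ) :=
  ((Icc (0:ℤ) a) ×ˢ (Icc (0:ℤ) b)).image (fun q => (q.1 - z, q.2 - z))

lemma mem_Dset (a b : ℕ) (z : ℤ) (p : ℤ × ℤ) :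
    p ∈ Dset a b z ↔ 0 ≤ p.1 + z ∧ p.1 + z ≤ a ∧ 0 ≤ p.2 + z ∧ p.2 + z ≤ b :=
  mem_image_shift _ _ _ _ _ _

lemma card_Dset (a b : ℕ) (z : ℤ) : (Dset a b z).card = (a + 1) * (b + 1) := by
  rw [Dset, card_image_shift]
  norm_num

noncomputable def Uset (a b : ℕ) (c : ℕ) : Finset (ℤ × ℤ) :=
  (Icc (0:ℤ) c).biUnion (fun z => Dset a b z)

lemma mem_Uset (a b c : ℕ) (p : ℤ × ℤ) :
    p ∈ Uset a b c ↔ ∃ z : ℤ, 0 ≤ z ∧ z ≤ c ∧ p ∈ Dset a b z := by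
  simp only [Uset, Finset.mem_biUnion, Finset.mem_Icc]
  tauto

lemma card_Uset (a b c : ℕ) :
    (Uset a b c).card = (a + 1) * (b + 1) + c * (a + b + 1) := by
  induction c with
  | zero =>
    have : Uset a b 0 = Dset a b 0 := by
      ext p
      simp only [mem_Uset, Nat.cast_zero]
      constructor
      · rintro ⟨z, h1, h2, hd⟩
        have : z = 0 := le_antisymm h2 h1
        rwa [this] at hd
      · intro h; exact ⟨0, le_refl _, le_refl _, h⟩
    rw [this, card_Dset]
    ring
  | succ c ih =>
    have hU : Uset a b (c + 1) = Uset a b c ∪ Dset a b (c + 1) := by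
      ext p
      simp only [mem_Uset, Finset.mem_union, Nat.cast_add, Nat.cast_one]
      constructor
      · rintro ⟨z, h1, h2, hd⟩
        rcases lt_or_ge z ((c : ℤ) + 1) with h | h
        · exact Or.inl ⟨z, h1, by omega, hd⟩
        · refine Or.inr ?_
          have : z = (c : ℤ) + 1 := by omega
          rwa [this] at hd
      · rintro (⟨z, h1, h2, hd⟩ | hd)
        · exact ⟨z, h1, by omega, hd⟩
        · exact ⟨(c : ℤ) + 1, by omega, by omega, hd⟩
    have hsd : Dset a b (c + 1) \ Uset a b c = Dset a b (c + 1) \ Dset a b c := by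
      ext p
      simp only [Finset.mem_sdiff, mem_Uset]
      constructor
      · rintro ⟨hp, hn⟩
        exact ⟨hp, fun hc => hn ⟨c, by omega, by omega, hc⟩⟩
      · rintro ⟨hp, hn⟩
        refine ⟨hp, ?_⟩
        rintro ⟨z, h1, h2, hd⟩
        apply hn
        rw [mem_Dset] at hp hd ⊢
        omega
    have hinter : Dset a b (c + 1) ∩ Dset a b c
        = ((Icc (1:ℤ) a) ×ˢ (Icc (1:ℤ) b)).image
            (fun q => (q.1 - ((c:ℤ) + 1), q.2 - ((c:ℤ) + 1))) := by
      ext p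
      rw [Finset.mem_inter, mem_Dset, mem_Dset, mem_image_shift]
      omega
    have hic : (Dset a b (c + 1) ∩ Dset a b c).card = a * b := by
      rw [hinter, card_image_shift]
      norm_num
    have hkey : (Dset a b (c + 1) ∩ Dset a b c).card
        + (Dset a b (c + 1) \ Dset a b c).card = (Dset a b (c + 1)).card :=
      Finset.card_inter_add_card_sdiff _ _
    rw [card_Dset] at hkey
    rw [hic] at hkey
    have hcu : (Uset a b (c + 1)).card
        = (Uset a b c).card + (Dset a b (c + 1) \ Uset a b c).card := by
      rw [hU]
      rw [Finset.union_comm, ← Finset.card_sdiff_add_card]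
      omega
    rw [hcu, hsd, ih]
    have : (Dset a b (c + 1) \ Dset a b c).card = a + b + 1 := by nlinarith [hkey]
    rw [this]
    ring

/-- The map `B : ℤ^(a+b+c) → ℤ²`,
`B(x, y, z) = (Σxᵢ - Σz_k, Σy_j - Σz_k)`, is surjective, and the image of the
cube `{±1}^(a+b+c)` under `B` has exactly `ab + ac + bc + a + b + c + 1`
lattice points. -/
theorem stmt_19 (a b c : ℕ) (ha : 0 < a) (hb : 0 < b) (hc : 0 < c)
    (B : ((Fin a → ℤ) × (Fin b → ℤ) × (Fin c → ℤ)) → ℤ × ℤ)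
    (hB : ∀ v, B v =
      (∑ i, v.1 i - ∑ k, v.2.2 k, ∑ j, v.2.1 j - ∑ k, v.2.2 k)) :
    Function.Surjective B ∧
    (B '' {v | (∀ i, v.1 i = 1 ∨ v.1 i = -1) ∧
               (∀ j, v.2.1 j = 1 ∨ v.2.1 j = -1) ∧
               (∀ k, v.2.2 k = 1 ∨ v.2.2 k = -1)}).ncard
      = a * b + a * c + b * c + a + b + c + 1 := by
  classical
  constructor
  · -- surjectivity
    rintro ⟨p, q⟩
    refine ⟨(fun i => if i = ⟨0, ha⟩ then p else 0,
             fun j => if j = ⟨0, hb⟩ then q else 0,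
             fun _ => 0), ?_⟩
    rw [hB]
    simp [Finset.sum_ite_eq']
  · -- counting
    set φ : ℤ × ℤ → ℤ × ℤ := fun p => (2 * p.1 + ((c:ℤ) - a), 2 * p.2 + ((c:ℤ) - b))
      with hφ
    have hφinj : Function.Injective φ := by
      rintro ⟨x, y⟩ ⟨x', y'⟩ h
      simp only [hφ, Prod.mk.injEq] at h ⊢
      omega
    have hset : B '' {v : ((Fin a → ℤ) × (Fin b → ℤ) × (Fin c → ℤ)) |
          (∀ i, v.1 i = 1 ∨ v.1 i = -1) ∧
          (∀ j, v.2.1 j = 1 ∨ v.2.1 j = -1) ∧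
          (∀ k, v.2.2 k = 1 ∨ v.2.2 k = -1)}
        = ↑((Uset a b c).image φ) := by
      ext P
      simp only [Set.mem_image, Set.mem_setOf_eq, Finset.coe_image, Finset.mem_coe]
      constructor
      · rintro ⟨w, ⟨hx, hy, hz⟩, rfl⟩
        obtain ⟨x, hx0, hxa, hsx⟩ := sum_pm_range a w.1 hx
        obtain ⟨y, hy0, hyb, hsy⟩ := sum_pm_range b w.2.1 hy
        obtain ⟨z, hz0, hzc, hsz⟩ := sum_pm_range c w.2.2 hz
        refine ⟨(x - z, y - z), ?_, ?_⟩
        · rw [mem_Uset]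
          exact ⟨z, hz0, hzc, by rw [mem_Dset]; constructor <;> simp <;> omega⟩
        · rw [hB, hφ]
          simp only [Prod.mk.injEq]
          constructor <;> omega
      · rintro ⟨q, hq, rfl⟩
        rw [mem_Uset] at hq
        obtain ⟨z, hz0, hzc, hd⟩ := hq
        rw [mem_Dset] at hd
        obtain ⟨f, hf, hsf⟩ := exists_pm_sum a (q.1 + z) (by omega) (by omega)
        obtain ⟨g, hg, hsg⟩ := exists_pm_sum b (q.2 + z) (by omega) (by omega)
        obtain ⟨h, hh, hsh⟩ := exists_pm_sum c z (by omega) (by omega)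
        refine ⟨(f, g, h), ⟨hf, hg, hh⟩, ?_⟩
        rw [hB, hφ]
        simp only [Prod.mk.injEq]
        constructor <;> omega
    rw [hset, Set.ncard_coe_finset, Finset.card_image_of_injective _ hφinj,
      card_Uset]
    ring
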